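/- Let X ≥ 1/2, E₀ ≥ 0, C₁ ≥ 0, let G : [−X, X] → [0, ∞) be continuous, and let Θ : [−X, X] → ℝ be twice continuously differentiable with Θ(s) ≤ 2E₀ for all s ∈ [−X, X], satisfying the delay differential inequality Θ''(s) − (3/2)·Θ(s) + (1/8)·(Θ(s − 1/2) + Θ(s + 1/2)) ≥ −C₁·G(s) for every s ∈ (−X + 1/2, X − 1/2). Then for every s ∈ [−X, X] one has Θ(s) ≤ 2E₀·(e^{s − X + 1} + e^{−s − X + 1}) + (C₁/2)·∫_{−X}^{X} e^{−|s − q|}·G(q) dq. -/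

import Mathlib

open Set MeasureTheory intervalIntegral

lemma aux_iteratedDerivWithin_nhds {f : ℝ → ℝ} {s : Set ℝ} {x : ℝ} {n : ℕ} (h : s ∈ nhds x) :
    iteratedDerivWithin n f s x = iteratedDeriv n f x := by
  rw [iteratedDerivWithin, iteratedDeriv, ← iteratedFDerivWithin_univ, ← Set.univ_inter s,
    iteratedFDerivWithin_inter h]

lemma aux_no_neg_second_deriv {w g : ℝ → ℝ} {a D : ℝ}
    (hmin : IsLocalMin w a)
    (hw : ∀ᶠ t in nhds a, HasDerivAt w (g t) t)
    (hg : HasDerivAt g D a) (hD : D < 0) : False := by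
  have hga : g a = 0 := by
    have h1 : deriv w a = g a := hw.self_of_nhds.deriv
    have h2 := hmin.deriv_eq_zero
    rw [h1] at h2; exact h2
  have hslope : Filter.Tendsto (slope g a) (nhdsWithin a {a}ᶜ) (nhds D) :=
    hasDerivAt_iff_tendsto_slope.1 hg
  have hev : ∀ᶠ t in nhdsWithin a (Iio a), 0 < g t := by
    have h3 : ∀ᶠ t in nhdsWithin a {a}ᶜ, slope g a t < 0 :=
      hslope.eventually (Iio_mem_nhds hD)
    have h4 : nhdsWithin a (Iio a) ≤ nhdsWithin a {a}ᶜ :=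
      nhdsWithin_mono _ (fun t ht => ne_of_lt ht)
    filter_upwards [h4 h3, self_mem_nhdsWithin] with t ht hlt
    rw [slope_def_field, div_neg_iff] at ht
    have hlt' : t < a := hlt
    rcases ht with ⟨h, _⟩ | ⟨_, h2⟩
    · rw [hga] at h; linarith
    · linarith
  rw [eventually_nhdsWithin_iff] at hev
  rcases Metric.eventually_nhds_iff.1 (hev.and (hw.and (hmin : ∀ᶠ t in nhds a, w a ≤ w t)))
    with ⟨ε, hε, hball⟩
  set b := a - ε / 2 with hb
  have hb_mem : ∀ t ∈ Icc b a, dist t a < ε := by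
    intro t ht
    rw [Real.dist_eq, abs_lt]
    constructor <;> [skip; skip] <;> simp only [hb] at ht ⊢ <;>
      [linarith [ht.1]; linarith [ht.2]]
  have hmono : StrictMonoOn w (Icc b a) := by
    apply strictMonoOn_of_hasDerivWithinAt_pos (convex_Icc b a) (f' := g)
    · intro t ht
      exact ((hball (hb_mem t ht)).2.1).continuousAt.continuousWithinAt
    · intro t ht
      rw [interior_Icc] at ht
      exact ((hball (hb_mem t ⟨le_of_lt ht.1, le_of_lt ht.2⟩)).2.1).hasDerivWithinAt
    · intro t ht
      rw [interior_Icc] at ht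
      exact (hball (hb_mem t ⟨le_of_lt ht.1, le_of_lt ht.2⟩)).1 ht.2
  have hba : b < a := by simp only [hb]; linarith
  have h5 : w b < w a := hmono ⟨le_refl b, le_of_lt hba⟩ ⟨le_of_lt hba, le_refl a⟩ hba
  have h6 : w a ≤ w b := (hball (hb_mem b ⟨le_refl b, le_of_lt hba⟩)).2.2
  linarith

lemma aux_kernel_cont {s : ℝ} : Continuous (fun q : ℝ => Real.exp (-|s - q|)) :=
  Real.continuous_exp.comp ((continuous_const.sub continuous_id).abs.neg)

lemma aux_kernel_split {X : ℝ} {G : ℝ → ℝ} (hG : ContinuousOn G (Icc (-X) X))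
    {s : ℝ} (hs : s ∈ Icc (-X) X) :
    (∫ q in (-X)..X, Real.exp (-|s - q|) * G q)
      = Real.exp (-s) * (∫ q in (-X)..s, Real.exp q * G q)
        + Real.exp s * ∫ q in s..X, Real.exp (-q) * G q := by
  have hsub1 : uIcc (-X) s ⊆ Icc (-X) X := by
    rw [uIcc_of_le hs.1]; exact Icc_subset_Icc le_rfl hs.2
  have hsub2 : uIcc s X ⊆ Icc (-X) X := by
    rw [uIcc_of_le hs.2]; exact Icc_subset_Icc hs.1 le_rfl
  have h1 : IntervalIntegrable (fun q => Real.exp (-|s - q|) * G q) volume (-X) s :=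
    (aux_kernel_cont.continuousOn.mul (hG.mono hsub1)).intervalIntegrable
  have h2 : IntervalIntegrable (fun q => Real.exp (-|s - q|) * G q) volume s X :=
    (aux_kernel_cont.continuousOn.mul (hG.mono hsub2)).intervalIntegrable
  rw [← intervalIntegral.integral_add_adjacent_intervals h1 h2]
  congr 1
  · rw [← intervalIntegral.integral_const_mul]
    apply intervalIntegral.integral_congr
    intro q hq
    rw [uIcc_of_le hs.1] at hq
    have habs : |s - q| = s - q := abs_of_nonneg (by linarith [hq.2])
    show Real.exp (-|s - q|) * G q = Real.exp (-s) * (Real.exp q * G q)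
    rw [habs, show -(s - q) = -s + q by ring, Real.exp_add]
    ring
  · rw [← intervalIntegral.integral_const_mul]
    apply intervalIntegral.integral_congr
    intro q hq
    rw [uIcc_of_le hs.2] at hq
    have habs : |s - q| = -(s - q) := abs_of_nonpos (by linarith [hq.1])
    show Real.exp (-|s - q|) * G q = Real.exp s * (Real.exp (-q) * G q)
    rw [habs, show -(-(s - q)) = s + -q by ring, Real.exp_add]
    ring

lemma aux_kernel_mono {X : ℝ} {G : ℝ → ℝ} (hG : ContinuousOn G (Icc (-X) X))
    (hGpos : ∀ q ∈ Icc (-X) X, 0 ≤ G q) (hXX : -X ≤ X) {s t : ℝ} (hst : |t - s| ≤ 1/2) :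
    (∫ q in (-X)..X, Real.exp (-|t - q|) * G q)
      ≤ Real.exp (1/2) * ∫ q in (-X)..X, Real.exp (-|s - q|) * G q := by
  have hsub : uIcc (-X) X ⊆ Icc (-X) X := by rw [uIcc_of_le hXX]
  have h1 : IntervalIntegrable (fun q => Real.exp (-|t - q|) * G q) volume (-X) X :=
    (aux_kernel_cont.continuousOn.mul (hG.mono hsub)).intervalIntegrable
  have h2 : IntervalIntegrable (fun q => Real.exp (1/2) * (Real.exp (-|s - q|) * G q))
      volume (-X) X :=
    (continuous_const.continuousOn.mul
      (aux_kernel_cont.continuousOn.mul (hG.mono hsub))).intervalIntegrable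
  have h3 : ∀ q ∈ Icc (-X) X,
      Real.exp (-|t - q|) * G q ≤ Real.exp (1/2) * (Real.exp (-|s - q|) * G q) := by
    intro q hq
    have htri : |s - q| ≤ |s - t| + |t - q| := abs_sub_le s t q
    have hst' : |s - t| ≤ 1/2 := by rwa [abs_sub_comm]
    have hexp : Real.exp (-|t - q|) ≤ Real.exp (1/2) * Real.exp (-|s - q|) := by
      rw [← Real.exp_add]
      apply Real.exp_le_exp.mpr
      linarith
    calc Real.exp (-|t - q|) * G q ≤ (Real.exp (1/2) * Real.exp (-|s - q|)) * G q :=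
          mul_le_mul_of_nonneg_right hexp (hGpos q hq)
      _ = Real.exp (1/2) * (Real.exp (-|s - q|) * G q) := by ring
  calc (∫ q in (-X)..X, Real.exp (-|t - q|) * G q)
      ≤ ∫ q in (-X)..X, Real.exp (1/2) * (Real.exp (-|s - q|) * G q) :=
        intervalIntegral.integral_mono_on hXX h1 h2 h3
    _ = Real.exp (1/2) * ∫ q in (-X)..X, Real.exp (-|s - q|) * G q :=
        intervalIntegral.integral_const_mul _ _

/-- Comparison estimate: a bounded `C²` function satisfying the delay differential inequality
`Θ'' - (3/2)Θ + (1/8)(Θ(·-1/2) + Θ(·+1/2)) ≥ -C₁·G` is dominated by the explicit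
supersolution with `A = B = 2E₀·e`. -/
theorem delay_comparison_estimate (X : ℝ) (hX : 1/2 ≤ X) (E₀ : ℝ) (hE₀ : 0 ≤ E₀)
    (C₁ : ℝ) (hC₁ : 0 ≤ C₁) (G : ℝ → ℝ)
    (hG : ContinuousOn G (Set.Icc (-X) X))
    (hGpos : ∀ s ∈ Set.Icc (-X) X, 0 ≤ G s)
    (Θ : ℝ → ℝ)
    (hΘ : ContDiffOn ℝ 2 Θ (Set.Icc (-X) X))
    (hΘbd : ∀ s ∈ Set.Icc (-X) X, Θ s ≤ 2 * E₀)
    (hineq : ∀ s ∈ Set.Ioo (-X + 1/2) (X - 1/2),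
      -C₁ * G s ≤ iteratedDerivWithin 2 Θ (Set.Icc (-X) X) s - (3/2) * Θ s
        + (1/8) * (Θ (s - 1/2) + Θ (s + 1/2))) :
    ∀ s ∈ Set.Icc (-X) X,
      Θ s ≤ 2 * E₀ * (Real.exp (s - X + 1) + Real.exp (-s - X + 1))
        + (C₁ / 2) * ∫ q in (-X)..X, Real.exp (-|s - q|) * G q := by
  have hXX : -X ≤ X := by linarith
  set U : Set ℝ := Set.Ioo (-X) X with hU
  have hUopen : IsOpen U := isOpen_Ioo
  have hUI : U ⊆ Set.Icc (-X) X := Set.Ioo_subset_Icc_self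
  have hGU : ∀ t ∈ U, ContinuousAt G t := fun t ht =>
    (hG t (hUI ht)).continuousAt (Icc_mem_nhds ht.1 ht.2)
  -- exponential constants
  have hexp_half : Real.exp (1/2) ≤ 2 := by
    have h1 : Real.exp (1/2) ≤ Real.exp (Real.log 2) :=
      Real.exp_le_exp.mpr (by linarith [Real.log_two_gt_d9])
    rwa [Real.exp_log (by norm_num : (0:ℝ) < 2)] at h1
  have hexp_neg_half : Real.exp (-(1/2)) ≤ 1 :=
    (Real.exp_le_exp.mpr (by norm_num : (-(1/2):ℝ) ≤ 0)).trans_eq Real.exp_zero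
  -- primitives
  set A : ℝ → ℝ := fun s => ∫ q in (-X)..s, Real.exp q * G q with hAdef
  set B : ℝ → ℝ := fun s => ∫ q in s..X, Real.exp (-q) * G q with hBdef
  set v : ℝ → ℝ := fun s => Real.exp (-s) * A s + Real.exp s * B s with hvdef
  have hkernel : ∀ s ∈ Set.Icc (-X) X,
      (∫ q in (-X)..X, Real.exp (-|s - q|) * G q) = v s := fun s hs => aux_kernel_split hG hs
  -- integrability of the two integrands
  have hcA : ContinuousOn (fun q => Real.exp q * G q) (Set.Icc (-X) X) :=
    Real.continuous_exp.continuousOn.mul hG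
  have hcB : ContinuousOn (fun q => Real.exp (-q) * G q) (Set.Icc (-X) X) :=
    (Real.continuous_exp.comp continuous_neg).continuousOn.mul hG
  have hintA : IntegrableOn (fun q => Real.exp q * G q) (Set.Icc (-X) X) volume :=
    hcA.integrableOn_Icc
  have hintB : IntegrableOn (fun q => Real.exp (-q) * G q) (Set.Icc (-X) X) volume :=
    hcB.integrableOn_Icc
  have hiiA : ∀ s ∈ Set.Icc (-X) X, ∀ t ∈ Set.Icc (-X) X,
      IntervalIntegrable (fun q => Real.exp q * G q) volume s t := fun s hs t ht =>
    (hintA.mono_set (uIcc_subset_Icc hs ht)).intervalIntegrable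
  have hiiB : ∀ s ∈ Set.Icc (-X) X, ∀ t ∈ Set.Icc (-X) X,
      IntervalIntegrable (fun q => Real.exp (-q) * G q) volume s t := fun s hs t ht =>
    (hintB.mono_set (uIcc_subset_Icc hs ht)).intervalIntegrable
  have hmemX : X ∈ Set.Icc (-X) X := ⟨hXX, le_rfl⟩
  have hmemX' : -X ∈ Set.Icc (-X) X := ⟨le_rfl, hXX⟩
  -- derivatives of A and B on U
  have hA' : ∀ t ∈ U, HasDerivAt A (Real.exp t * G t) t := by
    intro t ht
    exact intervalIntegral.integral_hasDerivAt_right (hiiA _ hmemX' t (hUI ht))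
      (ContinuousAt.stronglyMeasurableAtFilter hUopen
        (fun x hx => Real.continuous_exp.continuousAt.mul (hGU x hx)) t ht)
      (Real.continuous_exp.continuousAt.mul (hGU t ht))
  have hB' : ∀ t ∈ U, HasDerivAt B (-(Real.exp (-t) * G t)) t := by
    intro t ht
    exact intervalIntegral.integral_hasDerivAt_left (hiiB t (hUI ht) _ hmemX)
      (ContinuousAt.stronglyMeasurableAtFilter hUopen
        (fun x hx => (Real.continuous_exp.comp continuous_neg).continuousAt.mul (hGU x hx)) t ht)
      ((Real.continuous_exp.comp continuous_neg).continuousAt.mul (hGU t ht))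
  -- continuity of A, B, v on Icc
  have hAc : ContinuousOn A (Set.Icc (-X) X) := by
    have := continuousOn_primitive_interval (a := -X) (b := X) (μ := volume)
      (f := fun q => Real.exp q * G q) (by rwa [uIcc_of_le hXX])
    rwa [uIcc_of_le hXX] at this
  have hBc : ContinuousOn B (Set.Icc (-X) X) := by
    have := continuousOn_primitive_interval_left (a := -X) (b := X) (μ := volume)
      (f := fun q => Real.exp (-q) * G q) (by rwa [uIcc_of_le hXX])
    rwa [uIcc_of_le hXX] at this
  have hvc : ContinuousOn v (Set.Icc (-X) X) :=
    ((Real.continuous_exp.comp continuous_neg).continuousOn.mul hAc).add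
      (Real.continuous_exp.continuousOn.mul hBc)
  -- nonnegativity of v on Icc
  have hvpos : ∀ s ∈ Set.Icc (-X) X, 0 ≤ v s := by
    intro s hs
    have hA0 : 0 ≤ A s := intervalIntegral.integral_nonneg hs.1
      (fun u hu => mul_nonneg (Real.exp_pos u).le
        (hGpos u ⟨hu.1, le_trans hu.2 hs.2⟩))
    have hB0 : 0 ≤ B s := intervalIntegral.integral_nonneg hs.2
      (fun u hu => mul_nonneg (Real.exp_pos (-u)).le
        (hGpos u ⟨le_trans hs.1 hu.1, hu.2⟩))
    exact add_nonneg (mul_nonneg (Real.exp_pos _).le hA0) (mul_nonneg (Real.exp_pos _).le hB0)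
  -- derivatives of v
  set v1 : ℝ → ℝ := fun s => -Real.exp (-s) * A s + Real.exp s * B s with hv1def
  have hexpneg : ∀ t : ℝ, HasDerivAt (fun s => Real.exp (-s)) (-Real.exp (-t)) t := by
    intro t
    have := ((hasDerivAt_id t).neg).exp
    simpa using this
  have hv' : ∀ t ∈ U, HasDerivAt v (v1 t) t := by
    intro t ht
    have h1 := ((hexpneg t).mul (hA' t ht)).add ((Real.hasDerivAt_exp t).mul (hB' t ht))
    refine h1.congr_deriv ?_
    simp only [hv1def]
    ring
  have hv1' : ∀ t ∈ U, HasDerivAt v1 (v t - 2 * G t) t := by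
    intro t ht
    have h1 := (((hexpneg t).neg).mul (hA' t ht)).add ((Real.hasDerivAt_exp t).mul (hB' t ht))
    refine h1.congr_deriv ?_
    have he : Real.exp (-t) * Real.exp t = 1 := by rw [← Real.exp_add]; norm_num
    simp only [hvdef, Pi.neg_apply]
    linear_combination (-(2 * G t)) * he
  -- the comparison function
  set E : ℝ → ℝ := fun s => 2 * E₀ * (Real.exp (s - X + 1) + Real.exp (-s - X + 1)) with hEdef
  set f : ℝ → ℝ := fun s => E s + C₁ / 2 * v s with hfdef
  set f1 : ℝ → ℝ :=
    fun s => 2 * E₀ * (Real.exp (s - X + 1) - Real.exp (-s - X + 1)) + C₁ / 2 * v1 s with hf1def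
  have hE' : ∀ t : ℝ, HasDerivAt E (2 * E₀ * (Real.exp (t - X + 1) - Real.exp (-t - X + 1))) t := by
    intro t
    have h1 : HasDerivAt (fun s : ℝ => Real.exp (s - X + 1)) (Real.exp (t - X + 1)) t := by
      have := (((hasDerivAt_id t).sub_const X).add_const 1).exp
      simpa using this
    have h2 : HasDerivAt (fun s : ℝ => Real.exp (-s - X + 1)) (-Real.exp (-t - X + 1)) t := by
      have := ((((hasDerivAt_id t).neg).sub_const X).add_const 1).exp
      simpa using this
    have := ((h1.add h2).const_mul (2 * E₀))
    refine this.congr_deriv ?_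
    ring
  have hE'' : ∀ t : ℝ,
      HasDerivAt (fun s => 2 * E₀ * (Real.exp (s - X + 1) - Real.exp (-s - X + 1))) (E t) t := by
    intro t
    have h1 : HasDerivAt (fun s : ℝ => Real.exp (s - X + 1)) (Real.exp (t - X + 1)) t := by
      have := (((hasDerivAt_id t).sub_const X).add_const 1).exp
      simpa using this
    have h2 : HasDerivAt (fun s : ℝ => Real.exp (-s - X + 1)) (-Real.exp (-t - X + 1)) t := by
      have := ((((hasDerivAt_id t).neg).sub_const X).add_const 1).exp
      simpa using this
    have := ((h1.sub h2).const_mul (2 * E₀))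
    refine this.congr_deriv ?_
    simp only [hEdef]
    ring
  have hf' : ∀ t ∈ U, HasDerivAt f (f1 t) t := by
    intro t ht
    exact (hE' t).add ((hv' t ht).const_mul (C₁ / 2))
  have hf1' : ∀ t ∈ U, HasDerivAt f1 (E t + C₁ / 2 * (v t - 2 * G t)) t := by
    intro t ht
    exact (hE'' t).add ((hv1' t ht).const_mul (C₁ / 2))
  -- supersolution inequality
  have hsuper : ∀ t ∈ Set.Ioo (-X + 1/2) (X - 1/2),
      E t + C₁ / 2 * (v t - 2 * G t)
        ≤ -C₁ * G t + (3/2) * f t - (1/8) * (f (t - 1/2) + f (t + 1/2)) := by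
    intro t ht
    have htI : t ∈ Set.Icc (-X) X := ⟨by linarith [ht.1], by linarith [ht.2]⟩
    have ht1 : t - 1/2 ∈ Set.Icc (-X) X := ⟨by linarith [ht.1], by linarith [ht.2]⟩
    have ht2 : t + 1/2 ∈ Set.Icc (-X) X := ⟨by linarith [ht.1], by linarith [ht.2]⟩
    have hcomp : ∀ u ∈ Set.Icc (-X) X, |u - t| ≤ 1/2 → v u ≤ 2 * v t := by
      intro u hu hut
      have h1 : v u ≤ Real.exp (1/2) * v t := by
        rw [← hkernel u hu, ← hkernel t htI]
        exact aux_kernel_mono hG hGpos hXX hut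
      have h2 : Real.exp (1/2) * v t ≤ 2 * v t :=
        mul_le_mul_of_nonneg_right hexp_half (hvpos t htI)
      exact le_trans h1 h2
    have hv1c : v (t - 1/2) ≤ 2 * v t := hcomp _ ht1 (by
      rw [show t - 1/2 - t = -(1/2) by ring, abs_neg,
        abs_of_nonneg (by norm_num : (0:ℝ) ≤ 1/2)])
    have hv2c : v (t + 1/2) ≤ 2 * v t := hcomp _ ht2 (by
      rw [show t + 1/2 - t = 1/2 by ring, abs_of_nonneg (by norm_num : (0:ℝ) ≤ 1/2)])
    have ha1 : Real.exp (t - 1/2 - X + 1) = Real.exp (t - X + 1) * Real.exp (-(1/2)) := by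
      rw [← Real.exp_add]; congr 1; ring
    have ha2 : Real.exp (-(t - 1/2) - X + 1) = Real.exp (-t - X + 1) * Real.exp (1/2) := by
      rw [← Real.exp_add]; congr 1; ring
    have ha3 : Real.exp (t + 1/2 - X + 1) = Real.exp (t - X + 1) * Real.exp (1/2) := by
      rw [← Real.exp_add]; congr 1; ring
    have ha4 : Real.exp (-(t + 1/2) - X + 1) = Real.exp (-t - X + 1) * Real.exp (-(1/2)) := by
      rw [← Real.exp_add]; congr 1; ring
    have hEid : E (t - 1/2) + E (t + 1/2) = (Real.exp (1/2) + Real.exp (-(1/2))) * E t := by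
      simp only [hEdef]
      rw [ha1, ha2, ha3, ha4]
      ring
    have hEpos : 0 ≤ E t := by
      simp only [hEdef]
      positivity
    have hEsum : E (t - 1/2) + E (t + 1/2) ≤ 4 * E t := by
      rw [hEid]
      nlinarith [hEpos, hexp_half, hexp_neg_half, (Real.exp_pos (1/2)).le,
        (Real.exp_pos (-(1/2))).le]
    have hvsum : C₁ / 2 * (v (t - 1/2) + v (t + 1/2)) ≤ C₁ / 2 * (4 * v t) :=
      mul_le_mul_of_nonneg_left (by linarith) (by linarith)
    have hf1 : f (t - 1/2) = E (t - 1/2) + C₁/2 * v (t - 1/2) := rfl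
    have hf2 : f (t + 1/2) = E (t + 1/2) + C₁/2 * v (t + 1/2) := rfl
    have hf0 : f t = E t + C₁/2 * v t := rfl
    rw [hf0, hf1, hf2]
    have hexpand : C₁ / 2 * (v t - 2 * G t) = C₁ / 2 * v t - C₁ * G t := by ring
    have hex2 : C₁ / 2 * (v (t - 1/2) + v (t + 1/2))
        = C₁/2 * v (t - 1/2) + C₁/2 * v (t + 1/2) := by ring
    have hex3 : C₁ / 2 * (4 * v t) = 4 * (C₁/2 * v t) := by ring
    rw [hexpand] at *
    rw [hex2, hex3] at hvsum
    linarith [hvsum, hEsum]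
  -- continuity of w and existence of a minimum
  set w : ℝ → ℝ := fun s => f s - Θ s with hwdef
  have hc1 : Continuous fun s : ℝ => Real.exp (s - X + 1) :=
    Real.continuous_exp.comp (((continuous_id.sub continuous_const).add continuous_const))
  have hc2 : Continuous fun s : ℝ => Real.exp (-s - X + 1) :=
    Real.continuous_exp.comp (((continuous_neg.sub continuous_const).add continuous_const))
  have hEc : Continuous E := continuous_const.mul (hc1.add hc2)
  have hfc : ContinuousOn f (Set.Icc (-X) X) :=
    hEc.continuousOn.add (continuousOn_const.mul hvc)
  have hwc : ContinuousOn w (Set.Icc (-X) X) := hfc.sub hΘ.continuousOn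
  obtain ⟨s₀, hs₀I, hs₀min⟩ : ∃ s₀ ∈ Set.Icc (-X) X, IsMinOn w (Set.Icc (-X) X) s₀ :=
    isCompact_Icc.exists_isMinOn (Set.nonempty_Icc.2 hXX) hwc
  -- boundary estimate
  have hfge : ∀ t ∈ Set.Icc (-X) X, (t ≤ -X + 1/2 ∨ X - 1/2 ≤ t) → 0 ≤ w t := by
    intro t htI hcase
    have hv0 : 0 ≤ v t := hvpos t htI
    have hE1 : 2 * E₀ ≤ E t := by
      have hsum : 1 ≤ Real.exp (t - X + 1) + Real.exp (-t - X + 1) := by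
        rcases hcase with h | h
        · have h0 : (0:ℝ) ≤ -t - X + 1 := by linarith
          linarith [Real.one_le_exp h0, (Real.exp_pos (t - X + 1)).le]
        · have h0 : (0:ℝ) ≤ t - X + 1 := by linarith
          linarith [Real.one_le_exp h0, (Real.exp_pos (-t - X + 1)).le]
      calc 2 * E₀ = 2 * E₀ * 1 := by ring
        _ ≤ 2 * E₀ * (Real.exp (t - X + 1) + Real.exp (-t - X + 1)) :=
            mul_le_mul_of_nonneg_left hsum (by linarith)
        _ = E t := rfl
    have hΘt := hΘbd t htI
    have hCv : 0 ≤ C₁ / 2 * v t := mul_nonneg (by linarith) hv0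
    have hwt : w t = E t + C₁ / 2 * v t - Θ t := rfl
    rw [hwt]
    linarith
  have hkey : 0 ≤ w s₀ := by
    by_contra hneg
    push_neg at hneg
    have hs₀mem : s₀ ∈ Set.Ioo (-X + 1/2) (X - 1/2) := by
      by_contra h
      rw [Set.mem_Ioo, not_and_or] at h
      push_neg at h
      replace h : s₀ ≤ -X + 1/2 ∨ X - 1/2 ≤ s₀ := h.imp id id
      apply absurd hneg
      push_neg
      exact hfge s₀ hs₀I h
    have hs₀U : s₀ ∈ U := ⟨by linarith [hs₀mem.1], by linarith [hs₀mem.2]⟩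
    have hΘU : ContDiffOn ℝ 2 Θ U := hΘ.mono hUI
    have hΘdiff : ∀ t ∈ U, HasDerivAt Θ (deriv Θ t) t := by
      intro t ht
      exact (((hΘU t ht).contDiffAt (hUopen.mem_nhds ht)).differentiableAt
        (by norm_num)).hasDerivAt
    have hdΘ : ContDiffOn ℝ 1 (deriv Θ) U := hΘU.deriv_of_isOpen hUopen (by norm_num)
    have hΘ2 : HasDerivAt (deriv Θ) (deriv (deriv Θ) s₀) s₀ :=
      (((hdΘ s₀ hs₀U).contDiffAt (hUopen.mem_nhds hs₀U)).differentiableAt one_ne_zero).hasDerivAt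
    have hiter : iteratedDerivWithin 2 Θ (Set.Icc (-X) X) s₀ = deriv (deriv Θ) s₀ := by
      rw [aux_iteratedDerivWithin_nhds (Icc_mem_nhds hs₀U.1 hs₀U.2),
        show (2:ℕ) = 1 + 1 from rfl, iteratedDeriv_succ, iteratedDeriv_one]
    have hΘineq := hineq s₀ hs₀mem
    rw [hiter] at hΘineq
    have h1I : s₀ - 1/2 ∈ Set.Icc (-X) X := ⟨by linarith [hs₀mem.1], by linarith [hs₀mem.2]⟩
    have h2I : s₀ + 1/2 ∈ Set.Icc (-X) X := ⟨by linarith [hs₀mem.1], by linarith [hs₀mem.2]⟩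
    have hw1 : w s₀ ≤ w (s₀ - 1/2) := hs₀min h1I
    have hw2 : w s₀ ≤ w (s₀ + 1/2) := hs₀min h2I
    have hsup := hsuper s₀ hs₀mem
    have hDneg : (E s₀ + C₁ / 2 * (v s₀ - 2 * G s₀)) - deriv (deriv Θ) s₀ < 0 := by
      have e0 : w s₀ = f s₀ - Θ s₀ := rfl
      have e1 : w (s₀ - 1/2) = f (s₀ - 1/2) - Θ (s₀ - 1/2) := rfl
      have e2 : w (s₀ + 1/2) = f (s₀ + 1/2) - Θ (s₀ + 1/2) := rfl
      have h4 : (E s₀ + C₁ / 2 * (v s₀ - 2 * G s₀)) - deriv (deriv Θ) s₀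
          ≤ 3/2 * w s₀ - 1/8 * (w (s₀ - 1/2) + w (s₀ + 1/2)) := by
        rw [e0, e1, e2]
        linarith [hsup, hΘineq]
      linarith [h4, hw1, hw2, hneg]
    exact aux_no_neg_second_deriv
      (hs₀min.isLocalMin (Icc_mem_nhds hs₀U.1 hs₀U.2))
      (by filter_upwards [hUopen.mem_nhds hs₀U] with t ht
          exact (hf' t ht).sub (hΘdiff t ht))
      ((hf1' s₀ hs₀U).sub hΘ2) hDneg
  -- conclusion
  intro s hs
  have h1 : w s₀ ≤ w s := hs₀min hs
  have h2 : 0 ≤ w s := le_trans hkey h1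
  have h3 : Θ s ≤ f s := by simp only [hwdef] at h2; linarith
  rw [hkernel s hs]
  calc Θ s ≤ f s := h3
    _ = 2 * E₀ * (Real.exp (s - X + 1) + Real.exp (-s - X + 1)) + C₁ / 2 * v s := rfl
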